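/- arXiv:math/9907099 — 3 statements merged into one kernel-verified Lean document; each statement's English description precedes it below -/
import Mathlib

section
/- The linear map φ: h6 → S determined by φ(N) = -D - (1/2)M, φ(A+) = P, φ(A-) = K, φ(B+) = 2H, φ(B-) = 2C, φ(M') = M is an isomorphism of Lie algebras between the two-photon algebra h6 and the centrally extended Schrödinger algebra S. -/
open TensorProduct

noncomputable section

variable (L : Type) [LieRing L] [LieAlgebra ℝ L]

/-- The wedge X∧Y = X⊗Y - Y⊗X in S⊗S. -/
def wedge (X Y : L) : L ⊗[ℝ] L := X ⊗ₜ[ℝ] Y - Y ⊗ₜ[ℝ] X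

/-- The adjoint action of X on S⊗S: X·r = (ad_X⊗id + id⊗ad_X)(r). -/
def act (X : L) : (L ⊗[ℝ] L) →ₗ[ℝ] (L ⊗[ℝ] L) :=
  LinearMap.rTensor L (LieAlgebra.ad ℝ L X) + LinearMap.lTensor L (LieAlgebra.ad ℝ L X)

/-- S∧S: the span of wedges, i.e. the skew-symmetric part of S⊗S. -/
def skewPart : Submodule ℝ (L ⊗[ℝ] L) :=
  Submodule.span ℝ {w | ∃ X Y : L, w = wedge L X Y}

/-- 1-cocycle condition. -/
def IsCocycle (δ : L → L ⊗[ℝ] L) : Prop :=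
  ∀ X Y : L, δ ⁅X, Y⁆ = act L X (δ Y) - act L Y (δ X)

/-- The coboundary cocommutator δ_r(X) = X·r, as a linear map. -/
def cobdry (r : L ⊗[ℝ] L) : L →ₗ[ℝ] L ⊗[ℝ] L where
  toFun X := act L X r
  map_add' X Y := by
    have h : LieAlgebra.ad ℝ L (X + Y) = LieAlgebra.ad ℝ L X + LieAlgebra.ad ℝ L Y :=
      map_add _ _ _
    simp only [act, h, LinearMap.rTensor_add, LinearMap.lTensor_add, LinearMap.add_apply]
    abel
  map_smul' c X := by
    have h : LieAlgebra.ad ℝ L (c • X) = c • LieAlgebra.ad ℝ L X := map_smul _ _ _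
    simp only [act, h, LinearMap.rTensor_smul, LinearMap.lTensor_smul, LinearMap.add_apply,
      LinearMap.smul_apply, RingHom.id_apply, smul_add]

/-- The cyclic permutation ζ : x⊗y⊗z ↦ z⊗x⊗y on (S⊗S)⊗S. -/
def zeta : ((L ⊗[ℝ] L) ⊗[ℝ] L) →ₗ[ℝ] ((L ⊗[ℝ] L) ⊗[ℝ] L) :=
  ((TensorProduct.assoc ℝ L L L).symm.toLinearMap).comp
    ((TensorProduct.comm ℝ (L ⊗[ℝ] L) L).toLinearMap)

/-- The co-Jacobi identity for a linear map δ : S → S⊗S. -/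
def CoJacobi (δ : L →ₗ[ℝ] L ⊗[ℝ] L) : Prop :=
  ∀ X : L,
    ((LinearMap.id : ((L ⊗[ℝ] L) ⊗[ℝ] L) →ₗ[ℝ] ((L ⊗[ℝ] L) ⊗[ℝ] L)) + zeta L +
      zeta L ∘ₗ zeta L) (LinearMap.rTensor L δ (δ X)) = 0

/-- A Lie bialgebra cocommutator: skew-symmetric-valued 1-cocycle satisfying co-Jacobi. -/
def IsBialgCocomm (δ : L →ₗ[ℝ] L ⊗[ℝ] L) : Prop :=
  (∀ X : L, δ X ∈ skewPart L) ∧ IsCocycle L ⇑δ ∧ CoJacobi L δ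

/-- The general 15-parameter skew-symmetric element r(a,b,c) of S⊗S. -/
def rGen (D H P K C M : L) (a1 a2 a3 a4 a5 a6 b1 b2 b3 b4 b5 b6 c1 c2 c3 : ℝ) :
    L ⊗[ℝ] L :=
  a1 • wedge L D P + a2 • wedge L D H + a3 • wedge L P M + a4 • wedge L H M +
    a5 • wedge L P H + a6 • wedge L P C + b1 • wedge L D K + b2 • wedge L D C +
    b3 • wedge L K M + b4 • wedge L C M + b5 • wedge L K C + b6 • wedge L K H +
    c1 • wedge L D M + c2 • wedge L P K + c3 • wedge L H C

/-- The 19 Schrödinger bialgebra equations. -/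
def Eqs19 (a1 a2 a3 a4 a5 a6 b1 b2 b3 b4 b5 b6 c1 c2 c3 : ℝ) : Prop :=
  a6^2 + a6*b1 - 3*a1*b5 + b5*b6 = 0 ∧
  a2*a3 - 2*a1*a4 - a4*b6 - 3*a5*c1 + a5*c2 = 0 ∧
  a1*a2 + a2*b6 - a5*c3 = 0 ∧
  a5*b1 - a1*b6 - 2*a2*c1 - a4*c3 = 0 ∧
  a4*a6 + a4*b1 - a2*b3 - a5*b4 + a1*c1 - a1*c2 = 0 ∧
  3*a1*b2 - a2*b5 + a6*c3 + b1*c3 = 0 ∧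
  a3*b2 + 2*a1*b4 - a4*b5 + a6*c1 + a6*c2 + b3*c3 = 0 ∧
  3*a2*b5 + b2*b6 - a6*c3 = 0 ∧
  b6^2 + b6*a1 - 3*b1*a5 + a5*a6 = 0 ∧
  b2*b3 - 2*b1*b4 - b4*a6 - 3*b5*c1 - b5*c2 = 0 ∧
  b1*b2 + b2*a6 + b5*c3 = 0 ∧
  b5*a1 - b1*a6 - 2*b2*c1 + b4*c3 = 0 ∧
  b4*b6 + b4*a1 - b2*a3 - b5*a4 + b1*c1 + b1*c2 = 0 ∧
  3*b1*a2 - b2*a5 - b6*c3 - a1*c3 = 0 ∧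
  b3*a2 + 2*b1*a4 - b4*a5 + b6*c1 - b6*c2 - a3*c3 = 0 ∧
  3*b2*a5 + a2*a6 + b6*c3 = 0 ∧
  4*a2*b2 + c3^2 = 0 ∧
  2*a4*b2 + 2*a2*b4 + a5*b5 - a6*b6 = 0 ∧
  2*a1*b1 - a1*a6 - b1*b6 + a5*b5 - a6*b6 = 0

/-- Full antisymmetrization X∧Y∧Z in (S⊗S)⊗S. -/
def wedge3 (X Y Z : L) : (L ⊗[ℝ] L) ⊗[ℝ] L :=
  (X ⊗ₜ[ℝ] Y) ⊗ₜ[ℝ] Z - (X ⊗ₜ[ℝ] Z) ⊗ₜ[ℝ] Y - (Y ⊗ₜ[ℝ] X) ⊗ₜ[ℝ] Z +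
    (Y ⊗ₜ[ℝ] Z) ⊗ₜ[ℝ] X + (Z ⊗ₜ[ℝ] X) ⊗ₜ[ℝ] Y - (Z ⊗ₜ[ℝ] Y) ⊗ₜ[ℝ] X

/-- The Schouten bracket [[r,r]], written in coordinates w.r.t. a basis. -/
def schouten (B : Module.Basis (Fin 6) ℝ L) (r : L ⊗[ℝ] L) : (L ⊗[ℝ] L) ⊗[ℝ] L :=
  ∑ i : Fin 6, ∑ j : Fin 6, ∑ k : Fin 6, ∑ l : Fin 6,
    (((B.tensorProduct B).repr r (i, j)) * ((B.tensorProduct B).repr r (k, l))) •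
      ((⁅B i, B k⁆ ⊗ₜ[ℝ] B j) ⊗ₜ[ℝ] B l + (B i ⊗ₜ[ℝ] ⁅B j, B k⁆) ⊗ₜ[ℝ] B l +
        (B i ⊗ₜ[ℝ] B k) ⊗ₜ[ℝ] ⁅B j, B l⁆)

/-- The adjoint-invariant elements of S⊗S. -/
def invariants : Submodule ℝ (L ⊗[ℝ] L) where
  carrier := {η | ∀ X : L, act L X η = 0}
  add_mem' := by
    intro a b ha hb X
    simp [map_add, ha X, hb X]
  zero_mem' := by intro X; simp
  smul_mem' := by
    intro c a ha X
    simp [map_smul, ha X]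

/-- The space of skew-symmetric-valued 1-cocycles on S. -/
def cocycleSpace : Submodule ℝ (L →ₗ[ℝ] (L ⊗[ℝ] L)) where
  carrier := {δ | (∀ X : L, δ X ∈ skewPart L) ∧ IsCocycle L ⇑δ}
  add_mem' := by
    rintro a b ⟨ha1, ha2⟩ ⟨hb1, hb2⟩
    refine ⟨fun X => add_mem (ha1 X) (hb1 X), fun X Y => ?_⟩
    simp only [LinearMap.add_apply, ha2 X Y, hb2 X Y, map_add]
    abel
  zero_mem' := by
    refine ⟨fun X => zero_mem _, fun X Y => ?_⟩
    simp
  smul_mem' := by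
    rintro c a ⟨ha1, ha2⟩
    refine ⟨fun X => Submodule.smul_mem _ c (ha1 X), fun X Y => ?_⟩
    simp only [LinearMap.smul_apply, ha2 X Y, map_smul, smul_sub]

end

theorem statement17 (L : Type) [LieRing L] [LieAlgebra ℝ L]
    (D H P K C M : L) (B : Module.Basis (Fin 6) ℝ L)
    (hB : ⇑B = ![D, H, P, K, C, M])
    (hDP : ⁅D, P⁆ = -P) (hDK : ⁅D, K⁆ = K) (hKP : ⁅K, P⁆ = M)
    (hDH : ⁅D, H⁆ = (-2 : ℝ) • H) (hDC : ⁅D, C⁆ = (2 : ℝ) • C) (hHC : ⁅H, C⁆ = D)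
    (hKH : ⁅K, H⁆ = P) (hPC : ⁅P, C⁆ = -K) (hKC : ⁅K, C⁆ = 0) (hPH : ⁅P, H⁆ = 0)
    (hM : ∀ X : L, ⁅M, X⁆ = 0)
    (L2 : Type) [LieRing L2] [LieAlgebra ℝ L2]
    (N Ap Am Bp Bm M' : L2) (B2 : Module.Basis (Fin 6) ℝ L2)
    (hB2 : ⇑B2 = ![N, Ap, Am, Bp, Bm, M'])
    (g1 : ⁅N, Ap⁆ = Ap) (g2 : ⁅N, Am⁆ = -Am) (g3 : ⁅Am, Ap⁆ = M')
    (g4 : ⁅N, Bp⁆ = (2:ℝ) • Bp) (g5 : ⁅N, Bm⁆ = (-2:ℝ) • Bm)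
    (g6 : ⁅Bm, Bp⁆ = (4:ℝ) • N + (2:ℝ) • M')
    (g7 : ⁅Ap, Bm⁆ = (-2:ℝ) • Am) (g8 : ⁅Am, Bp⁆ = (2:ℝ) • Ap)
    (g9 : ⁅Ap, Bp⁆ = 0) (g10 : ⁅Am, Bm⁆ = 0) (g11 : ∀ X : L2, ⁅M', X⁆ = 0)
    (phi : L2 →ₗ[ℝ] L)
    (hN : phi N = -D - (1/2 : ℝ) • M) (hAp : phi Ap = P) (hAm : phi Am = K)
    (hBp : phi Bp = (2:ℝ) • H) (hBm : phi Bm = (2:ℝ) • C) (hM' : phi M' = M) :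
    (∀ x y : L2, phi ⁅x, y⁆ = ⁅phi x, phi y⁆) ∧ Function.Bijective phi := by
  -- reversed brackets in L2
  have g1' : ⁅Ap, N⁆ = -Ap := by rw [← lie_skew, g1]
  have g2' : ⁅Am, N⁆ = Am := by rw [← lie_skew, g2, neg_neg]
  have g3' : ⁅Ap, Am⁆ = -M' := by rw [← lie_skew, g3]
  have g4' : ⁅Bp, N⁆ = -((2:ℝ) • Bp) := by rw [← lie_skew, g4]
  have g5' : ⁅Bm, N⁆ = -((-2:ℝ) • Bm) := by rw [← lie_skew, g5]
  have g6' : ⁅Bp, Bm⁆ = -((4:ℝ) • N + (2:ℝ) • M') := by rw [← lie_skew, g6]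
  have g7' : ⁅Bm, Ap⁆ = -((-2:ℝ) • Am) := by rw [← lie_skew, g7]
  have g8' : ⁅Bp, Am⁆ = -((2:ℝ) • Ap) := by rw [← lie_skew, g8]
  have g9' : ⁅Bp, Ap⁆ = 0 := by rw [← lie_skew, g9, neg_zero]
  have g10' : ⁅Bm, Am⁆ = 0 := by rw [← lie_skew, g10, neg_zero]
  have g11' : ∀ X : L2, ⁅X, M'⁆ = 0 := fun X => by rw [← lie_skew, g11, neg_zero]
  -- reversed brackets in L
  have hPD : ⁅P, D⁆ = P := by rw [← lie_skew, hDP, neg_neg]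
  have hKD : ⁅K, D⁆ = -K := by rw [← lie_skew, hDK]
  have hPK : ⁅P, K⁆ = -M := by rw [← lie_skew, hKP]
  have hHD : ⁅H, D⁆ = -((-2:ℝ) • H) := by rw [← lie_skew, hDH]
  have hCD : ⁅C, D⁆ = -((2:ℝ) • C) := by rw [← lie_skew, hDC]
  have hCH : ⁅C, H⁆ = -D := by rw [← lie_skew, hHC]
  have hHK : ⁅H, K⁆ = -P := by rw [← lie_skew, hKH]
  have hCP : ⁅C, P⁆ = K := by rw [← lie_skew, hPC, neg_neg]
  have hCK : ⁅C, K⁆ = 0 := by rw [← lie_skew, hKC, neg_zero]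
  have hHP : ⁅H, P⁆ = 0 := by rw [← lie_skew, hPH, neg_zero]
  have hM2 : ∀ X : L, ⁅X, M⁆ = 0 := fun X => by rw [← lie_skew, hM, neg_zero]
  have e5 : (![N, Ap, Am, Bp, Bm, M'] : Fin 6 → L2) 5 = M' := rfl
  have f5 : (![D, H, P, K, C, M] : Fin 6 → L) 5 = M := rfl
  constructor
  · -- bracket preservation
    have key : ∀ i j : Fin 6, phi ⁅B2 i, B2 j⁆ = ⁅phi (B2 i), phi (B2 j)⁆ := by
      intro i j
      fin_cases i <;> fin_cases j <;>
        simp [hB2, e5, g1, g2, g3, g4, g5, g6, g7, g8, g9, g10, g11, g1', g2', g3', g4', g5',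
          g6', g7', g8', g9', g10', g11', lie_self, hN, hAp, hAm, hBp, hBm, hM',
          hDP, hDK, hKP, hDH, hDC, hHC, hKH, hPC, hKC, hPH, hM,
          hPD, hKD, hPK, hHD, hCD, hCH, hHK, hCP, hCK, hHP, hM2,
          map_smul, map_add, map_sub, map_neg, sub_lie, lie_sub, neg_lie, lie_neg,
          smul_lie, lie_smul, add_lie, lie_add, smul_smul, smul_sub, smul_add] <;>
        module
    let F1 : L2 →ₗ[ℝ] L2 →ₗ[ℝ] L := LinearMap.mk₂ ℝ (fun x y => phi ⁅x, y⁆)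
      (fun x x' y => by rw [add_lie, map_add])
      (fun c x y => by rw [smul_lie, map_smul])
      (fun x y y' => by rw [lie_add, map_add])
      (fun c x y => by rw [lie_smul, map_smul])
    let F2 : L2 →ₗ[ℝ] L2 →ₗ[ℝ] L := LinearMap.mk₂ ℝ (fun x y => ⁅phi x, phi y⁆)
      (fun x x' y => by rw [map_add, add_lie])
      (fun c x y => by rw [map_smul, smul_lie])
      (fun x y y' => by rw [map_add, lie_add])
      (fun c x y => by rw [map_smul, lie_smul])
    have hF : F1 = F2 := B2.ext fun i => B2.ext fun j => key i j
    intro x y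
    exact LinearMap.congr_fun (LinearMap.congr_fun hF x) y
  · -- bijectivity via explicit inverse
    set v : Fin 6 → L2 :=
      ![-N - (1/2 : ℝ) • M', (1/2 : ℝ) • Bp, Ap, Am, (1/2 : ℝ) • Bm, M'] with hv
    set psi : L →ₗ[ℝ] L2 := B.constr ℝ v with hpsi
    have hvB : ∀ i, psi (B i) = v i := fun i => B.constr_basis ℝ v i
    have pD : psi D = -N - (1/2 : ℝ) • M' := by simpa [hB, hv] using hvB 0
    have pH : psi H = (1/2 : ℝ) • Bp := by simpa [hB, hv] using hvB 1
    have pP : psi P = Ap := by simpa [hB, hv] using hvB 2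
    have pK : psi K = Am := by simpa [hB, hv] using hvB 3
    have pC : psi C = (1/2 : ℝ) • Bm := by simpa [hB, hv] using hvB 4
    have pM : psi M = M' := by simpa [hB, hv] using hvB 5
    have hcomp1 : psi ∘ₗ phi = LinearMap.id := by
      apply B2.ext; intro j
      fin_cases j <;>
        simp [hB2, e5, hN, hAp, hAm, hBp, hBm, hM', pD, pH, pP, pK, pC, pM,
          map_smul, map_sub, map_neg, smul_smul, smul_sub, smul_add] <;>
        module
    have hcomp2 : phi ∘ₗ psi = LinearMap.id := by
      apply B.ext; intro i
      fin_cases i <;>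
        simp [hB, f5, pD, pH, pP, pK, pC, pM, hN, hAp, hAm, hBp, hBm, hM',
          map_smul, map_sub, map_neg, smul_smul, smul_sub, smul_add] <;>
        module
    have l : Function.LeftInverse psi phi := fun x => by
      simpa using LinearMap.congr_fun hcomp1 x
    have r : Function.RightInverse psi phi := fun x => by
      simpa using LinearMap.congr_fun hcomp2 x
    exact ⟨l.injective, r.surjective⟩
end

section
/- The linear map ρ: S → M₄(ℝ) defined on the basis by the given 4×4 matrices is an injective Lie algebra homomorphism: ρ([X,Y]) = ρ(X)ρ(Y) - ρ(Y)ρ(X) for all X, Y ∈ S, and ρ is injective. -/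
open TensorProduct

theorem aux_mul4 (a11 a12 a13 a14 a21 a22 a23 a24 a31 a32 a33 a34 a41 a42 a43 a44
    b11 b12 b13 b14 b21 b22 b23 b24 b31 b32 b33 b34 b41 b42 b43 b44 : ℝ) :
    !![a11,a12,a13,a14; a21,a22,a23,a24; a31,a32,a33,a34; a41,a42,a43,a44] *
    !![b11,b12,b13,b14; b21,b22,b23,b24; b31,b32,b33,b34; b41,b42,b43,b44] =
    !![a11*b11+a12*b21+a13*b31+a14*b41, a11*b12+a12*b22+a13*b32+a14*b42,
       a11*b13+a12*b23+a13*b33+a14*b43, a11*b14+a12*b24+a13*b34+a14*b44;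
       a21*b11+a22*b21+a23*b31+a24*b41, a21*b12+a22*b22+a23*b32+a24*b42,
       a21*b13+a22*b23+a23*b33+a24*b43, a21*b14+a22*b24+a23*b34+a24*b44;
       a31*b11+a32*b21+a33*b31+a34*b41, a31*b12+a32*b22+a33*b32+a34*b42,
       a31*b13+a32*b23+a33*b33+a34*b43, a31*b14+a32*b24+a33*b34+a34*b44;
       a41*b11+a42*b21+a43*b31+a44*b41, a41*b12+a42*b22+a43*b32+a44*b42,
       a41*b13+a42*b23+a43*b33+a44*b43, a41*b14+a42*b24+a43*b34+a44*b44] := by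
  ext i j
  fin_cases i <;> fin_cases j <;> simp [Matrix.mul_apply, Fin.sum_univ_four]

theorem aux_sub4 (a11 a12 a13 a14 a21 a22 a23 a24 a31 a32 a33 a34 a41 a42 a43 a44
    b11 b12 b13 b14 b21 b22 b23 b24 b31 b32 b33 b34 b41 b42 b43 b44 : ℝ) :
    !![a11,a12,a13,a14; a21,a22,a23,a24; a31,a32,a33,a34; a41,a42,a43,a44] -
    !![b11,b12,b13,b14; b21,b22,b23,b24; b31,b32,b33,b34; b41,b42,b43,b44] =
    !![a11-b11,a12-b12,a13-b13,a14-b14; a21-b21,a22-b22,a23-b23,a24-b24;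
       a31-b31,a32-b32,a33-b33,a34-b34; a41-b41,a42-b42,a43-b43,a44-b44] := by
  ext i j
  fin_cases i <;> fin_cases j <;> simp [Matrix.vecHead, Matrix.vecTail]

theorem aux_add4 (a11 a12 a13 a14 a21 a22 a23 a24 a31 a32 a33 a34 a41 a42 a43 a44
    b11 b12 b13 b14 b21 b22 b23 b24 b31 b32 b33 b34 b41 b42 b43 b44 : ℝ) :
    !![a11,a12,a13,a14; a21,a22,a23,a24; a31,a32,a33,a34; a41,a42,a43,a44] +
    !![b11,b12,b13,b14; b21,b22,b23,b24; b31,b32,b33,b34; b41,b42,b43,b44] =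
    !![a11+b11,a12+b12,a13+b13,a14+b14; a21+b21,a22+b22,a23+b23,a24+b24;
       a31+b31,a32+b32,a33+b33,a34+b34; a41+b41,a42+b42,a43+b43,a44+b44] := by
  ext i j
  fin_cases i <;> fin_cases j <;> simp [Matrix.vecHead, Matrix.vecTail]

theorem aux_smul4 (c a11 a12 a13 a14 a21 a22 a23 a24 a31 a32 a33 a34 a41 a42 a43 a44 : ℝ) :
    c • !![a11,a12,a13,a14; a21,a22,a23,a24; a31,a32,a33,a34; a41,a42,a43,a44] =
    !![c*a11,c*a12,c*a13,c*a14; c*a21,c*a22,c*a23,c*a24;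
       c*a31,c*a32,c*a33,c*a34; c*a41,c*a42,c*a43,c*a44] := by
  ext i j
  fin_cases i <;> fin_cases j <;> simp [Matrix.vecHead, Matrix.vecTail]

theorem aux_neg4 (a11 a12 a13 a14 a21 a22 a23 a24 a31 a32 a33 a34 a41 a42 a43 a44 : ℝ) :
    -(!![a11,a12,a13,a14; a21,a22,a23,a24; a31,a32,a33,a34; a41,a42,a43,a44]) =
    !![-a11,-a12,-a13,-a14; -a21,-a22,-a23,-a24; -a31,-a32,-a33,-a34; -a41,-a42,-a43,-a44] := by
  ext i j
  fin_cases i <;> fin_cases j <;> simp [Matrix.vecHead, Matrix.vecTail]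

theorem aux_zero4 : (!![0,0,0,0; 0,0,0,0; 0,0,0,0; 0,0,0,0] : Matrix (Fin 4) (Fin 4) ℝ) = 0 := by
  ext i j
  fin_cases i <;> fin_cases j <;> simp [Matrix.vecHead, Matrix.vecTail]

set_option maxHeartbeats 1000000 in
theorem statement18 (L : Type) [LieRing L] [LieAlgebra ℝ L]
    (D H P K C M : L) (B : Module.Basis (Fin 6) ℝ L)
    (hB : ⇑B = ![D, H, P, K, C, M])
    (hDP : ⁅D, P⁆ = -P) (hDK : ⁅D, K⁆ = K) (hKP : ⁅K, P⁆ = M)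
    (hDH : ⁅D, H⁆ = (-2 : ℝ) • H) (hDC : ⁅D, C⁆ = (2 : ℝ) • C) (hHC : ⁅H, C⁆ = D)
    (hKH : ⁅K, H⁆ = P) (hPC : ⁅P, C⁆ = -K) (hKC : ⁅K, C⁆ = 0) (hPH : ⁅P, H⁆ = 0)
    (hM : ∀ X : L, ⁅M, X⁆ = 0)
    (rho : L →ₗ[ℝ] Matrix (Fin 4) (Fin 4) ℝ)
    (hrD : rho D = !![0,0,0,0; 0,-1,0,0; 0,0,1,0; 0,0,0,0])
    (hrH : rho H = !![0,0,0,0; 0,0,1,0; 0,0,0,0; 0,0,0,0])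
    (hrP : rho P = !![0,0,1,0; 0,0,0,1; 0,0,0,0; 0,0,0,0])
    (hrK : rho K = !![0,1,0,0; 0,0,0,0; 0,0,0,-1; 0,0,0,0])
    (hrC : rho C = !![0,0,0,0; 0,0,0,0; 0,-1,0,0; 0,0,0,0])
    (hrM : rho M = !![0,0,0,2; 0,0,0,0; 0,0,0,0; 0,0,0,0]) :
    (∀ X Y : L, rho ⁅X, Y⁆ = rho X * rho Y - rho Y * rho X) ∧ Function.Injective rho := by
  have hB0 : B 0 = D := by rw [hB]; rfl
  have hB1 : B 1 = H := by rw [hB]; rfl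
  have hB2 : B 2 = P := by rw [hB]; rfl
  have hB3 : B 3 = K := by rw [hB]; rfl
  have hB4 : B 4 = C := by rw [hB]; rfl
  have hB5 : B 5 = M := by rw [hB]; rfl
  have hPD : ⁅P, D⁆ = P := by rw [← lie_skew, hDP, neg_neg]
  have hKD : ⁅K, D⁆ = -K := by rw [← lie_skew, hDK]
  have hPK : ⁅P, K⁆ = -M := by rw [← lie_skew, hKP]
  have hHD : ⁅H, D⁆ = (2 : ℝ) • H := by rw [← lie_skew, hDH]; module
  have hCD : ⁅C, D⁆ = (-2 : ℝ) • C := by rw [← lie_skew, hDC]; module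
  have hCH : ⁅C, H⁆ = -D := by rw [← lie_skew, hHC]
  have hHK : ⁅H, K⁆ = -P := by rw [← lie_skew, hKH]
  have hCP : ⁅C, P⁆ = K := by rw [← lie_skew, hPC, neg_neg]
  have hCK : ⁅C, K⁆ = 0 := by rw [← lie_skew, hKC, neg_zero]
  have hHP : ⁅H, P⁆ = 0 := by rw [← lie_skew, hPH, neg_zero]
  have hXM : ∀ X : L, ⁅X, M⁆ = 0 := fun X => by rw [← lie_skew, hM, neg_zero]
  have key : ∀ X Y : L, rho ⁅X, Y⁆ = rho X * rho Y - rho Y * rho X := by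
    let φ : L →ₗ[ℝ] L →ₗ[ℝ] Matrix (Fin 4) (Fin 4) ℝ :=
      LinearMap.mk₂ ℝ (fun X Y => rho ⁅X, Y⁆)
        (fun X X' Y => by simp only [add_lie, map_add])
        (fun c X Y => by simp only [smul_lie, map_smul])
        (fun X Y Y' => by simp only [lie_add, map_add])
        (fun c X Y => by simp only [lie_smul, map_smul])
    let ψ : L →ₗ[ℝ] L →ₗ[ℝ] Matrix (Fin 4) (Fin 4) ℝ :=
      LinearMap.mk₂ ℝ (fun X Y => rho X * rho Y - rho Y * rho X)
        (fun X X' Y => by simp only [map_add, add_mul, mul_add]; abel)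
        (fun c X Y => by simp only [map_smul, smul_sub, Matrix.smul_mul, Matrix.mul_smul])
        (fun X Y Y' => by simp only [map_add, mul_add, add_mul]; abel)
        (fun c X Y => by simp only [map_smul, smul_sub, Matrix.smul_mul, Matrix.mul_smul])
    have hφψ : φ = ψ := by
      apply LinearMap.ext_basis B B
      intro i j
      fin_cases i <;> fin_cases j <;>
        simp only [φ, ψ, LinearMap.mk₂_apply, Fin.reduceFinMk, Fin.isValue, hB0, hB1, hB2, hB3, hB4, hB5,
          hDP, hDK, hKP, hDH, hDC, hHC, hKH, hPC, hKC, hPH, hM, hXM,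
          hPD, hKD, hPK, hHD, hCD, hCH, hHK, hCP, hCK, hHP,
          lie_self, map_neg, map_smul, map_zero,
          hrD, hrH, hrP, hrK, hrC, hrM] <;>
        norm_num only [aux_mul4, aux_sub4, aux_smul4, aux_neg4, aux_zero4]
    intro X Y
    exact LinearMap.congr_fun (LinearMap.congr_fun hφψ X) Y
  refine ⟨key, ?_⟩
  rw [← LinearMap.ker_eq_bot, LinearMap.ker_eq_bot']
  intro X hX
  have hrepr : ∀ i, B.repr X i = 0 := by
    have hsum : X = ∑ i : Fin 6, B.repr X i • B i := (B.sum_repr X).symm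
    have h0 : rho X = 0 := hX
    rw [hsum] at h0
    simp only [map_sum, map_add, map_smul, Fin.sum_univ_six, hB0, hB1, hB2, hB3, hB4, hB5,
      hrD, hrH, hrP, hrK, hrC, hrM, aux_smul4, aux_add4] at h0
    intro i
    fin_cases i
    · show B.repr X (0 : Fin 6) = 0
      have h := congrFun (congrFun h0 1) 1
      simp [Matrix.zero_apply] at h
      linarith
    · show B.repr X (1 : Fin 6) = 0
      have h := congrFun (congrFun h0 1) 2
      simp [Matrix.zero_apply] at h
      linarith
    · show B.repr X (2 : Fin 6) = 0
      have h := congrFun (congrFun h0 0) 2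
      simp [Matrix.zero_apply] at h
      linarith
    · show B.repr X (3 : Fin 6) = 0
      have h := congrFun (congrFun h0 0) 1
      simp [Matrix.zero_apply] at h
      linarith
    · show B.repr X (4 : Fin 6) = 0
      have h := congrFun (congrFun h0 2) 1
      simp [Matrix.zero_apply] at h
      linarith
    · show B.repr X (5 : Fin 6) = 0
      have h := congrFun (congrFun h0 0) 3
      simp [Matrix.zero_apply] at h
      linarith
  have hz : B.repr X = B.repr 0 := by
    rw [map_zero]; exact Finsupp.ext hrepr
  exact B.repr.injective hz
end

section
/- For all real numbers m, p, k, h, c, d, the product of matrix exponentials exp(m ρ(M)) · exp(p ρ(P)) · exp(k ρ(K)) · exp(h ρ(H)) · exp(c ρ(C)) · exp(d ρ(D)) equals the 4×4 matrix with rows (1, (k-(p+kh)c)e^{-d}, (p+kh)e^{d}, 2m-pk), (0, (1-hc)e^{-d}, h e^{d}, p), (0, -c e^{-d}, e^{d}, -k), (0, 0, 0, 1). -/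
open TensorProduct

lemma exp_sq_zero' {A : Matrix (Fin 4) (Fin 4) ℝ} (hA : A ^ 2 = 0) :
    NormedSpace.exp A = 1 + A := by
  rw [show NormedSpace.exp A = ∑' n : ℕ, ((n.factorial : ℝ)⁻¹) • A ^ n from
    congrFun (NormedSpace.exp_eq_tsum ℝ) A]
  rw [tsum_eq_sum (s := Finset.range 2) (by
    intro n hn
    have h2 : 2 ≤ n := by simp at hn; omega
    have hz : A ^ n = 0 := by
      calc A ^ n = A ^ 2 * A ^ (n - 2) := by rw [← pow_add]; congr 1; omega
      _ = 0 := by rw [hA, zero_mul]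
    simp [hz])]
  simp [Finset.sum_range_succ]


lemma exp_aux_M (t : ℝ) :
    NormedSpace.exp (t • (!![0,0,0,2; 0,0,0,0; 0,0,0,0; 0,0,0,0] : Matrix (Fin 4) (Fin 4) ℝ)) = !![1,0,0,2*t; 0,1,0,0; 0,0,1,0; 0,0,0,1] := by
  rw [exp_sq_zero' (by
    ext i j
    fin_cases i <;> fin_cases j <;>
      simp [pow_two, Matrix.mul_apply, Matrix.smul_apply, Matrix.vecHead, Matrix.vecTail,
        Fin.sum_univ_four])]
  ext i j
  fin_cases i <;> fin_cases j <;>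
    simp [Matrix.one_apply, Matrix.smul_apply, Matrix.vecHead, Matrix.vecTail] <;> ring

lemma exp_aux_P (t : ℝ) :
    NormedSpace.exp (t • (!![0,0,1,0; 0,0,0,1; 0,0,0,0; 0,0,0,0] : Matrix (Fin 4) (Fin 4) ℝ)) = !![1,0,t,0; 0,1,0,t; 0,0,1,0; 0,0,0,1] := by
  rw [exp_sq_zero' (by
    ext i j
    fin_cases i <;> fin_cases j <;>
      simp [pow_two, Matrix.mul_apply, Matrix.smul_apply, Matrix.vecHead, Matrix.vecTail,
        Fin.sum_univ_four])]
  ext i j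
  fin_cases i <;> fin_cases j <;>
    simp [Matrix.one_apply, Matrix.smul_apply, Matrix.vecHead, Matrix.vecTail] <;> ring

lemma exp_aux_K (t : ℝ) :
    NormedSpace.exp (t • (!![0,1,0,0; 0,0,0,0; 0,0,0,-1; 0,0,0,0] : Matrix (Fin 4) (Fin 4) ℝ)) = !![1,t,0,0; 0,1,0,0; 0,0,1,-t; 0,0,0,1] := by
  rw [exp_sq_zero' (by
    ext i j
    fin_cases i <;> fin_cases j <;>
      simp [pow_two, Matrix.mul_apply, Matrix.smul_apply, Matrix.vecHead, Matrix.vecTail,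
        Fin.sum_univ_four])]
  ext i j
  fin_cases i <;> fin_cases j <;>
    simp [Matrix.one_apply, Matrix.smul_apply, Matrix.vecHead, Matrix.vecTail] <;> ring

lemma exp_aux_H (t : ℝ) :
    NormedSpace.exp (t • (!![0,0,0,0; 0,0,1,0; 0,0,0,0; 0,0,0,0] : Matrix (Fin 4) (Fin 4) ℝ)) = !![1,0,0,0; 0,1,t,0; 0,0,1,0; 0,0,0,1] := by
  rw [exp_sq_zero' (by
    ext i j
    fin_cases i <;> fin_cases j <;>
      simp [pow_two, Matrix.mul_apply, Matrix.smul_apply, Matrix.vecHead, Matrix.vecTail,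
        Fin.sum_univ_four])]
  ext i j
  fin_cases i <;> fin_cases j <;>
    simp [Matrix.one_apply, Matrix.smul_apply, Matrix.vecHead, Matrix.vecTail] <;> ring

lemma exp_aux_C (t : ℝ) :
    NormedSpace.exp (t • (!![0,0,0,0; 0,0,0,0; 0,-1,0,0; 0,0,0,0] : Matrix (Fin 4) (Fin 4) ℝ)) = !![1,0,0,0; 0,1,0,0; 0,-t,1,0; 0,0,0,1] := by
  rw [exp_sq_zero' (by
    ext i j
    fin_cases i <;> fin_cases j <;>
      simp [pow_two, Matrix.mul_apply, Matrix.smul_apply, Matrix.vecHead, Matrix.vecTail,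
        Fin.sum_univ_four])]
  ext i j
  fin_cases i <;> fin_cases j <;>
    simp [Matrix.one_apply, Matrix.smul_apply, Matrix.vecHead, Matrix.vecTail] <;> ring

lemma exp_aux_D (t : ℝ) :
    NormedSpace.exp (t • (!![0,0,0,0; 0,-1,0,0; 0,0,1,0; 0,0,0,0] : Matrix (Fin 4) (Fin 4) ℝ)) =
      !![1,0,0,0; 0,Real.exp (-t),0,0; 0,0,Real.exp t,0; 0,0,0,1] := by
  have hdiag : t • (!![0,0,0,0; 0,-1,0,0; 0,0,1,0; 0,0,0,0] : Matrix (Fin 4) (Fin 4) ℝ)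
      = Matrix.diagonal ![0,-t,t,0] := by
    ext i j
    fin_cases i <;> fin_cases j <;>
      simp [Matrix.diagonal_apply, Matrix.smul_apply, Matrix.vecHead, Matrix.vecTail]
  rw [hdiag, Matrix.exp_diagonal]
  ext i j
  fin_cases i <;> fin_cases j <;>
    simp [Matrix.diagonal_apply, Pi.coe_exp, Real.exp_eq_exp_ℝ, Matrix.vecHead, Matrix.vecTail]

set_option maxHeartbeats 1000000 in
theorem statement19 (L : Type) [LieRing L] [LieAlgebra ℝ L]
    (D H P K C M : L) (B : Module.Basis (Fin 6) ℝ L)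
    (hB : ⇑B = ![D, H, P, K, C, M])
    (hDP : ⁅D, P⁆ = -P) (hDK : ⁅D, K⁆ = K) (hKP : ⁅K, P⁆ = M)
    (hDH : ⁅D, H⁆ = (-2 : ℝ) • H) (hDC : ⁅D, C⁆ = (2 : ℝ) • C) (hHC : ⁅H, C⁆ = D)
    (hKH : ⁅K, H⁆ = P) (hPC : ⁅P, C⁆ = -K) (hKC : ⁅K, C⁆ = 0) (hPH : ⁅P, H⁆ = 0)
    (hM : ∀ X : L, ⁅M, X⁆ = 0)
    (rho : L →ₗ[ℝ] Matrix (Fin 4) (Fin 4) ℝ)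
    (hrD : rho D = !![0,0,0,0; 0,-1,0,0; 0,0,1,0; 0,0,0,0])
    (hrH : rho H = !![0,0,0,0; 0,0,1,0; 0,0,0,0; 0,0,0,0])
    (hrP : rho P = !![0,0,1,0; 0,0,0,1; 0,0,0,0; 0,0,0,0])
    (hrK : rho K = !![0,1,0,0; 0,0,0,0; 0,0,0,-1; 0,0,0,0])
    (hrC : rho C = !![0,0,0,0; 0,0,0,0; 0,-1,0,0; 0,0,0,0])
    (hrM : rho M = !![0,0,0,2; 0,0,0,0; 0,0,0,0; 0,0,0,0])
    (m p k h c d : ℝ) :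
    NormedSpace.exp (m • rho M) * NormedSpace.exp (p • rho P) *
      NormedSpace.exp (k • rho K) * NormedSpace.exp (h • rho H) *
      NormedSpace.exp (c • rho C) * NormedSpace.exp (d • rho D) =
    !![1, (k - (p + k*h)*c) * Real.exp (-d), (p + k*h) * Real.exp d, 2*m - p*k;
       0, (1 - h*c) * Real.exp (-d), h * Real.exp d, p;
       0, -(c * Real.exp (-d)), Real.exp d, -k;
       0, 0, 0, 1] := by
  rw [hrM, hrP, hrK, hrH, hrC, hrD, exp_aux_M, exp_aux_P, exp_aux_K, exp_aux_H, exp_aux_C,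
    exp_aux_D]
  ext i j
  fin_cases i <;> fin_cases j <;>
    simp [Matrix.mul_apply, Fin.sum_univ_four, Matrix.vecHead, Matrix.vecTail] <;> ring
end
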